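/- Let α ∈ ℕ^n with α ≠ 0, let |α| = α_1 + … + α_n, and let p ≥ 1 be a real number. Define x̂ ∈ ℝ^n by x̂_i = (α_i / |α|)^{1/p} for i = 1, …, n. Then x̂ lies on the unit p-sphere (Σ_i |x̂_i|^p = 1) and the monomial x ↦ Π_{i=1}^n x_i^{α_i} attains its maximum over the unit p-sphere at x̂: for every x ∈ ℝ^n with Σ_{i=1}^n |x_i|^p = 1 one has Π_i x_i^{α_i} ≤ Π_i x̂_i^{α_i}. -/
import Mathlib

open Finset

theorem monomial_max_on_p_sphere
    {n : ℕ} (α : Fin n → ℕ) (hα : α ≠ 0) (p : ℝ) (hp : 1 ≤ p)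
    (xhat : Fin n → ℝ)
    (hxhat : ∀ i, xhat i = ((α i : ℝ) / (∑ j, (α j : ℝ))) ^ (1 / p)) :
    (∑ i, |xhat i| ^ p) = 1 ∧
    (∀ x : Fin n → ℝ, (∑ i, |x i| ^ p) = 1 →
      (∏ i, (x i) ^ (α i)) ≤ ∏ i, (xhat i) ^ (α i)) := by
  have hp0 : (0:ℝ) < p := lt_of_lt_of_le one_pos hp
  set S : ℝ := ∑ j, (α j : ℝ) with hSdef
  have hS0 : 0 < S := by
    obtain ⟨i, hi⟩ : ∃ i, α i ≠ 0 := by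
      by_contra h; push_neg at h; exact hα (funext h)
    have h1 : (0:ℝ) < (α i : ℝ) := by exact_mod_cast Nat.pos_of_ne_zero hi
    rw [hSdef]
    exact lt_of_lt_of_le h1
      (Finset.single_le_sum (f := fun j => ((α j : ℝ))) (fun j _ => Nat.cast_nonneg _) (mem_univ i))
  set w : Fin n → ℝ := fun i => (α i : ℝ) / S with hwdef
  have hw0 : ∀ i, 0 ≤ w i := fun i => div_nonneg (Nat.cast_nonneg _) hS0.le
  have hw1 : ∑ i, w i = 1 := by
    rw [hwdef, ← Finset.sum_div, ← hSdef, div_self hS0.ne']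
  have hxh : ∀ i, xhat i = w i ^ (1/p) := hxhat
  have hxh0 : ∀ i, 0 ≤ xhat i := fun i => by
    rw [hxh]; exact Real.rpow_nonneg (hw0 i) _
  have habs : ∀ i, |xhat i| ^ p = w i := by
    intro i
    rw [abs_of_nonneg (hxh0 i), hxh, ← Real.rpow_mul (hw0 i),
      one_div_mul_cancel hp0.ne', Real.rpow_one]
  constructor
  · simp only [habs]; exact hw1
  · intro x hx
    set t : Fin n → ℝ := fun i => |x i| ^ p with htdef
    have ht0 : ∀ i, 0 ≤ t i := fun i => Real.rpow_nonneg (abs_nonneg _) _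
    -- key inequality by AM-GM
    have hA : ∏ i, (t i) ^ (w i) ≤ ∏ i, (w i) ^ (w i) := by
      have h1 : ∏ i, (t i / w i) ^ (w i) ≤ 1 := by
        calc ∏ i, (t i / w i) ^ (w i)
            ≤ ∑ i, w i * (t i / w i) :=
              Real.geom_mean_le_arith_mean_weighted _ _ _ (fun i _ => hw0 i) hw1
                (fun i _ => div_nonneg (ht0 i) (hw0 i))
          _ ≤ ∑ i, t i := by
              refine Finset.sum_le_sum fun i _ => ?_
              rcases eq_or_ne (w i) 0 with h | h
              · simp [h, ht0 i]
              · rw [mul_comm, div_mul_cancel₀ _ h]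
          _ = 1 := hx
      have h2 : ∏ i, t i ^ w i = (∏ i, (t i / w i) ^ w i) * ∏ i, w i ^ w i := by
        rw [← Finset.prod_mul_distrib]
        refine Finset.prod_congr rfl fun i _ => ?_
        rcases eq_or_ne (w i) 0 with h | h
        · simp [h]
        · rw [← Real.mul_rpow (div_nonneg (ht0 i) (hw0 i)) (hw0 i),
            div_mul_cancel₀ _ h]
      have hPw : 0 ≤ ∏ i, w i ^ w i :=
        Finset.prod_nonneg fun i _ => Real.rpow_nonneg (hw0 i) _
      rw [h2]
      exact mul_le_of_le_one_left hPw h1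
    have hL : ∀ i, |x i| ^ (α i) = (t i ^ w i) ^ (S / p) := by
      intro i
      rw [← Real.rpow_mul (ht0 i)]
      have hw' : w i * (S / p) = (α i : ℝ) / p := by
        rw [hwdef]; field_simp
      rw [hw', htdef, ← Real.rpow_natCast |x i| (α i),
        ← Real.rpow_mul (abs_nonneg _)]
      congr 1
      field_simp
    have hR : ∀ i, xhat i ^ (α i) = (w i ^ w i) ^ (S / p) := by
      intro i
      rw [← Real.rpow_mul (hw0 i)]
      have hw' : w i * (S / p) = (α i : ℝ) / p := by
        rw [hwdef]; field_simp
      rw [hw', hxh, ← Real.rpow_natCast (w i ^ (1/p)) (α i),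
        ← Real.rpow_mul (hw0 i)]
      congr 1
      field_simp
    calc ∏ i, x i ^ (α i)
        ≤ |∏ i, x i ^ (α i)| := le_abs_self _
      _ = ∏ i, |x i| ^ (α i) := by
          rw [Finset.abs_prod]; exact Finset.prod_congr rfl fun i _ => abs_pow _ _
      _ = (∏ i, t i ^ w i) ^ (S / p) := by
          rw [← Real.finset_prod_rpow _ _
            (fun i _ => Real.rpow_nonneg (ht0 i) _) _]
          exact Finset.prod_congr rfl fun i _ => hL i
      _ ≤ (∏ i, w i ^ w i) ^ (S / p) :=
          Real.rpow_le_rpow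
            (Finset.prod_nonneg fun i _ => Real.rpow_nonneg (ht0 i) _)
            hA (div_nonneg hS0.le hp0.le)
      _ = ∏ i, xhat i ^ (α i) := by
          rw [← Real.finset_prod_rpow univ (fun i => w i ^ w i)
            (fun i _ => Real.rpow_nonneg (hw0 i) _) (S / p)]
          exact (Finset.prod_congr rfl fun i _ => (hR i)).symm
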